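/- Let M be a DFA representing a (Σ, 𝒳)-spanner with non-tail-spanning language, let 𝒮 be an SLP with start symbol S₀ deriving document d, and let F' = {j ∈ F : T_{S₀}[1, j] ≠ ∅}. Then ⟦M⟧(d) is the disjoint union over j ∈ F' and k ∈ I_{S₀}[1, j] of the sets D_{j,k} = {Λ_B ∪ (Λ_C + |deriv(B)|) : Λ_B ∈ T_B[1, k], Λ_C ∈ T_C[k, j]}, where S₀ → BC is the rule for S₀ and I_{S₀}[1, j] = {k : T_B[1, k] ≠ ∅ and T_C[k, j] ≠ ∅}. That is, these sets cover ⟦M⟧(d) and are pairwise disjoint. -/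

import Mathlib

/-- A non-tail-spanning marked word `A₁ b₁ A₂ b₂ … Aₙ bₙ` (the trailing set symbol
`A_{n+1}` is empty and omitted). -/
abbrev MWord (Γ Alph : Type*) := List (Finset Γ × Alph)

/-- The `s`-rightshift of a partial marker set. -/
def rshift {Γ : Type*} [DecidableEq Γ] (Λ : Finset (Γ × ℕ)) (s : ℕ) : Finset (Γ × ℕ) :=
  Λ.image (fun p => (p.1, p.2 + s))

/-- Insert the markers of `Λ` into the document `d` (positions `> |d|` are not placed;
for non-tail-spanning `Λ` no marker is lost). -/
def ins {Γ Alph : Type*} [DecidableEq Γ] (d : List Alph) (Λ : Finset (Γ × ℕ)) :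
    MWord Γ Alph :=
  (d.zipIdx.map Prod.swap).map (fun ib => ((Λ.filter (fun p => p.2 = ib.1 + 1)).image Prod.fst, ib.2))

/-- Erase all set symbols. -/
def getWord {Γ Alph : Type*} (w : MWord Γ Alph) : List Alph := w.map Prod.snd

/-- The partial marker set `{(σ, i) : σ ∈ Aᵢ}` encoded by a marked word. -/
def mkd {Γ Alph : Type*} [DecidableEq Γ] (w : MWord Γ Alph) : Finset (Γ × ℕ) :=
  ((w.zipIdx.map Prod.swap).map (fun ib => ib.2.1.image (fun σ => (σ, ib.1 + 1)))).foldr (· ∪ ·) ∅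

/-- Serialize a marked word into the sequence of symbols (over `𝒫(Γ_𝒳) ∪ Σ`) read
by an automaton: `A₁, b₁, A₂, b₂, …, Aₙ, bₙ`. -/
def ser {Γ Alph : Type*} (w : MWord Γ Alph) : List (Finset Γ ⊕ Alph) :=
  w.flatMap (fun Ab => [Sum.inl Ab.1, Sum.inr Ab.2])

/-- `T_X[p, q]` for a DFA. -/
def TsetD {Γ Alph Q : Type*} [DecidableEq Γ] (δ : Q → (Finset Γ ⊕ Alph) → Q)
    (w : List Alph) (i j : Q) : Set (Finset (Γ × ℕ)) :=
  {Λ | (∀ p ∈ Λ, 1 ≤ p.2 ∧ p.2 ≤ w.length + 1) ∧ (∀ p ∈ Λ, p.2 ≠ w.length + 1) ∧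
    (ser (ins w Λ)).foldl δ i = j}

/-- `D_{j,k}` for the start rule `S₀ → BC` with `wB = deriv(B)`, `wC = deriv(C)`. -/
def Dset {Γ Alph Q : Type*} [DecidableEq Γ] (δ : Q → (Finset Γ ⊕ Alph) → Q)
    (wB wC : List Alph) (q1 k j : Q) : Set (Finset (Γ × ℕ)) :=
  {Λ | ∃ ΛB ∈ TsetD δ wB q1 k, ∃ ΛC ∈ TsetD δ wC k j, Λ = ΛB ∪ rshift ΛC wB.length}

/-- The spanner result of the DFA `M` on document `d`. -/
def spanResD {Γ Alph Q : Type*} [DecidableEq Γ] (δ : Q → (Finset Γ ⊕ Alph) → Q)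
    (q1 : Q) (F : Set Q) (d : List Alph) : Set (Finset (Γ × ℕ)) :=
  {S | ∃ w : MWord Γ Alph, (ser w).foldl δ q1 ∈ F ∧ getWord w = d ∧ mkd w = S}

set_option linter.unusedSectionVars false

section Aux
variable {Γ Alph Q : Type*} [DecidableEq Γ]

lemma length_ins (d : List Alph) (Λ : Finset (Γ × ℕ)) : (ins d Λ).length = d.length := by
  simp [ins]

lemma getElem_ins (d : List Alph) (Λ : Finset (Γ × ℕ)) (i : ℕ) (h : i < d.length) :
    (ins d Λ)[i]'(by simpa [length_ins]) =
      ((Λ.filter (fun p => p.2 = i + 1)).image Prod.fst, d[i]) := by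
  simp [ins]

lemma getWord_ins (d : List Alph) (Λ : Finset (Γ × ℕ)) : getWord (ins d Λ) = d := by
  simp only [getWord, ins, List.map_map]
  apply List.ext_getElem <;> simp

lemma mem_foldr_union {α : Type*} [DecidableEq α] (l : List (Finset α)) (a : α) :
    a ∈ l.foldr (· ∪ ·) ∅ ↔ ∃ s ∈ l, a ∈ s := by
  induction l with
  | nil => simp
  | cons h t ih => simp [ih]

lemma mem_mkd {w : MWord Γ Alph} {a : Γ × ℕ} :
    a ∈ mkd w ↔ ∃ i, ∃ h : i < w.length, a.2 = i + 1 ∧ a.1 ∈ (w[i]).1 := by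
  obtain ⟨σ, n⟩ := a
  simp only [mkd, mem_foldr_union, List.map_map, List.mem_map]
  constructor
  · rintro ⟨s, ⟨⟨Ab, i⟩, hmem, rfl⟩, hs⟩
    rw [List.mk_mem_zipIdx_iff_getElem?] at hmem
    have hi : i < w.length := by
      by_contra h
      simp [List.getElem?_eq_none (le_of_not_gt h)] at hmem
    simp only [Function.comp_apply, Prod.swap, Finset.mem_image, Prod.mk.injEq] at hs
    obtain ⟨τ, hτ, rfl, rfl⟩ := hs
    refine ⟨i, hi, rfl, ?_⟩
    have : w[i] = Ab := by simpa [List.getElem?_eq_getElem hi] using hmem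
    simpa [this]
  · rintro ⟨i, hi, rfl, hσ⟩
    exact ⟨(w[i]).1.image (fun σ => (σ, i + 1)), ⟨(w[i], i),
      List.mk_mem_zipIdx_iff_getElem?.2 (List.getElem?_eq_getElem hi), rfl⟩,
      Finset.mem_image.2 ⟨σ, hσ, rfl⟩⟩

lemma mkd_ins (d : List Alph) (Λ : Finset (Γ × ℕ))
    (hΛ : ∀ p ∈ Λ, 1 ≤ p.2 ∧ p.2 ≤ d.length) : mkd (ins d Λ) = Λ := by
  ext ⟨σ, n⟩
  rw [mem_mkd]
  simp only [length_ins]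
  constructor
  · rintro ⟨i, hi, rfl, hσ⟩
    rw [getElem_ins d Λ i hi] at hσ
    simp only [Finset.mem_image, Finset.mem_filter] at hσ
    obtain ⟨⟨τ, m⟩, ⟨hp, hm⟩, rfl⟩ := hσ
    simp only at hm
    exact hm ▸ hp
  · intro hn
    obtain ⟨h1, h2⟩ := hΛ _ hn
    refine ⟨n - 1, by omega, by omega, ?_⟩
    rw [getElem_ins d Λ (n-1) (by omega)]
    exact Finset.mem_image.2 ⟨(σ, n), Finset.mem_filter.2 ⟨hn, by simp; omega⟩, rfl⟩

lemma ins_getWord_mkd (w : MWord Γ Alph) : ins (getWord w) (mkd w) = w := by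
  apply List.ext_getElem
  · simp [length_ins, getWord]
  · intro i h1 h2
    have hlen : i < (getWord w).length := by simpa [getWord]
    rw [getElem_ins _ _ i hlen]
    have hsnd : (getWord w)[i] = (w[i]).2 := by simp [getWord]
    refine Prod.ext ?_ hsnd
    ext σ
    simp only [Finset.mem_image, Finset.mem_filter]
    constructor
    · rintro ⟨⟨τ, m⟩, ⟨hp, hm⟩, rfl⟩
      rw [mem_mkd] at hp
      obtain ⟨i', hi', he, hσ⟩ := hp
      simp at he hm
      have : i' = i := by omega
      subst this; exact hσ
    · intro hσ
      exact ⟨(σ, i + 1), ⟨mem_mkd.2 ⟨i, h2, rfl, hσ⟩, rfl⟩, rfl⟩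

lemma ser_append (u v : MWord Γ Alph) : ser (u ++ v) = ser u ++ ser v :=
  List.flatMap_append

lemma ins_append (wB wC : List Alph) (ΛB ΛC : Finset (Γ × ℕ))
    (hB : ∀ p ∈ ΛB, p.2 ≤ wB.length) (hC : ∀ p ∈ ΛC, 1 ≤ p.2) :
    ins (wB ++ wC) (ΛB ∪ rshift ΛC wB.length) = ins wB ΛB ++ ins wC ΛC := by
  set s := wB.length
  apply List.ext_getElem
  · simp [length_ins]
  · intro i h1 h2
    have hd : i < (wB ++ wC).length := by simpa [length_ins] using h1
    rw [getElem_ins _ _ i hd]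
    by_cases hi : i < s
    · rw [List.getElem_append_left (by simpa [length_ins] : i < (ins wB ΛB).length),
        getElem_ins _ _ i hi]
      refine Prod.ext ?_ (by simp [List.getElem_append, show i < wB.length from hi])
      dsimp only
      congr 1
      ext ⟨τ, m⟩
      simp only [Finset.mem_filter, Finset.mem_union, rshift, Finset.mem_image, Prod.mk.injEq]
      constructor
      · rintro ⟨hmem | ⟨p, hp, rfl, rfl⟩, hm⟩
        · exact ⟨hmem, hm⟩
        · exfalso; have := hC _ hp; omega
      · rintro ⟨hmem, hm⟩; exact ⟨Or.inl hmem, hm⟩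
    · push_neg at hi
      have hic : i - s < wC.length := by
        simp [s] at hd; omega
      rw [List.getElem_append_right (by simpa [length_ins] : (ins wB ΛB).length ≤ i)]
      simp only [length_ins]
      rw [getElem_ins _ _ (i - s) hic]
      refine Prod.ext ?_ ?_
      · dsimp only
        ext σ
        simp only [Finset.mem_image, Finset.mem_filter, Finset.mem_union, rshift,
          Prod.mk.injEq]
        constructor
        · rintro ⟨⟨τ, m⟩, ⟨hmem | ⟨p, hp, rfl, rfl⟩, hm⟩, rfl⟩
          · exfalso; have := hB _ hmem; simp at hm; omega
          · refine ⟨p, ⟨hp, ?_⟩, rfl⟩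
            simp at hm ⊢; omega
        · rintro ⟨⟨τ, m⟩, ⟨hmem, hm⟩, rfl⟩
          refine ⟨(τ, m + s), ⟨Or.inr ⟨(τ, m), hmem, rfl⟩, ?_⟩, rfl⟩
          simp only at hm ⊢
          omega
      · simp only [List.getElem_append_right (by omega : s ≤ i)]; rfl

end Aux

section Main
variable {Γ Alph Q : Type*} [DecidableEq Γ] (δ : Q → (Finset Γ ⊕ Alph) → Q)

lemma Dset_subset_Tset (wB wC : List Alph) (q1 k j : Q) :
    Dset δ wB wC q1 k j ⊆ TsetD δ (wB ++ wC) q1 j := by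
  rintro Λ ⟨ΛB, ⟨hBbd, hBne, hBrun⟩, ΛC, ⟨hCbd, hCne, hCrun⟩, rfl⟩
  have hB' : ∀ p ∈ ΛB, p.2 ≤ wB.length := fun p hp => by
    have := hBbd p hp; have := hBne p hp; omega
  have hC1 : ∀ p ∈ ΛC, 1 ≤ p.2 := fun p hp => (hCbd p hp).1
  have hC' : ∀ p ∈ ΛC, p.2 ≤ wC.length := fun p hp => by
    have := hCbd p hp; have := hCne p hp; omega
  refine ⟨?_, ?_, ?_⟩
  · rintro ⟨τ, n⟩ hp
    simp only [Finset.mem_union, rshift, Finset.mem_image] at hp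
    rcases hp with hp | ⟨⟨τ', n'⟩, hq, he⟩
    · have := (hBbd _ hp).1; have := hB' _ hp
      simp only [List.length_append]; omega
    · have := hC1 _ hq; have := hC' _ hq
      simp only [Prod.mk.injEq] at he
      simp only [List.length_append]; omega
  · rintro ⟨τ, n⟩ hp
    simp only [Finset.mem_union, rshift, Finset.mem_image] at hp
    rcases hp with hp | ⟨⟨τ', n'⟩, hq, he⟩
    · have := hB' _ hp; simp only [List.length_append]; omega
    · have := hC' _ hq
      simp only [Prod.mk.injEq] at he
      simp only [List.length_append]; omega
  · rw [ins_append wB wC ΛB ΛC hB' hC1, ser_append, List.foldl_append, hBrun, hCrun]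

lemma Tset_split (wB wC : List Alph) (q1 j : Q) (Λ : Finset (Γ × ℕ))
    (hΛ : Λ ∈ TsetD δ (wB ++ wC) q1 j) :
    Λ ∈ Dset δ wB wC q1
      ((ser (ins wB (Λ.filter (fun p => p.2 ≤ wB.length)))).foldl δ q1) j := by
  obtain ⟨hbd, hne, hrun⟩ := hΛ
  have hbd' : ∀ p ∈ Λ, 1 ≤ p.2 ∧ p.2 ≤ wB.length + wC.length := by
    intro p hp
    have h1 := hbd p hp; have h2 := hne p hp
    simp only [List.length_append] at h1 h2; omega
  set ΛB := Λ.filter (fun p => p.2 ≤ wB.length) with hΛB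
  set ΛC := (Λ.filter (fun p => wB.length < p.2)).image (fun p => (p.1, p.2 - wB.length))
    with hΛC
  have hmemC : ∀ a : Γ × ℕ, a ∈ ΛC ↔ (a.1, a.2 + wB.length) ∈ Λ ∧ 1 ≤ a.2 := by
    rintro ⟨τ, n⟩
    simp only [hΛC, Finset.mem_image, Finset.mem_filter, Prod.mk.injEq]
    constructor
    · rintro ⟨⟨τ', n'⟩, ⟨hq, hlt⟩, he1, he2⟩
      have : n' = n + wB.length := by omega
      subst he1; rw [← this]; exact ⟨hq, by omega⟩
    · rintro ⟨hq, h1⟩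
      exact ⟨(τ, n + wB.length), ⟨hq, by omega⟩, rfl, by omega⟩
  have hsplit : Λ = ΛB ∪ rshift ΛC wB.length := by
    ext ⟨τ, n⟩
    simp only [Finset.mem_union, rshift, Finset.mem_image]
    constructor
    · intro h
      by_cases hn : n ≤ wB.length
      · exact Or.inl (Finset.mem_filter.2 ⟨h, hn⟩)
      · refine Or.inr ⟨(τ, n - wB.length), (hmemC _).2 ⟨?_, by omega⟩, ?_⟩
        · simpa [Nat.sub_add_cancel (le_of_not_ge hn)] using h
        · simp only [Prod.mk.injEq]; exact ⟨trivial, by omega⟩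
    · rintro (h | ⟨⟨τ', n'⟩, hq, he⟩)
      · exact (Finset.mem_filter.1 h).1
      · obtain ⟨hq', _⟩ := (hmemC _).1 hq
        simp only [Prod.mk.injEq] at he
        obtain ⟨rfl, rfl⟩ := he
        exact hq'
  have hBmem : ∀ p ∈ ΛB, p ∈ Λ ∧ p.2 ≤ wB.length := fun p hp => Finset.mem_filter.1 hp
  have hB' : ∀ p ∈ ΛB, p.2 ≤ wB.length := fun p hp => (hBmem p hp).2
  have hC1 : ∀ p ∈ ΛC, 1 ≤ p.2 := fun p hp => ((hmemC p).1 hp).2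
  have hCbd : ∀ p ∈ ΛC, p.2 ≤ wC.length := by
    intro p hp
    obtain ⟨hq, h1⟩ := (hmemC p).1 hp
    have := (hbd' _ hq).2; simp only at this; omega
  have hinsrw : ins (wB ++ wC) Λ = ins wB ΛB ++ ins wC ΛC := by
    rw [hsplit]; exact ins_append wB wC ΛB ΛC hB' hC1
  refine ⟨ΛB, ⟨?_, ?_, rfl⟩, ΛC, ⟨?_, ?_, ?_⟩, hsplit⟩
  · intro p hp
    obtain ⟨hpΛ, hple⟩ := hBmem p hp
    exact ⟨(hbd' p hpΛ).1, by omega⟩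
  · intro p hp; have := (hBmem p hp).2; omega
  · intro p hp; exact ⟨hC1 p hp, by have := hCbd p hp; omega⟩
  · intro p hp; have := hCbd p hp; omega
  · rw [← List.foldl_append, ← ser_append, ← hinsrw, hrun]

lemma k_determined (wB wC : List Alph) (q1 k j : Q) (Λ : Finset (Γ × ℕ))
    (h : Λ ∈ Dset δ wB wC q1 k j) :
    (ser (ins wB (Λ.filter (fun p => p.2 ≤ wB.length)))).foldl δ q1 = k := by
  obtain ⟨ΛB, ⟨hBbd, hBne, hBrun⟩, ΛC, ⟨hCbd, _, _⟩, rfl⟩ := h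
  have hfilter : (ΛB ∪ rshift ΛC wB.length).filter (fun p => p.2 ≤ wB.length) = ΛB := by
    ext ⟨τ, n⟩
    simp only [Finset.mem_filter, Finset.mem_union, rshift, Finset.mem_image]
    constructor
    · rintro ⟨h | ⟨⟨τ', n'⟩, hq, he⟩, hn⟩
      · exact h
      · exfalso
        have := (hCbd _ hq).1
        simp only [Prod.mk.injEq] at he
        omega
    · intro h
      have := hBbd _ h; have := hBne _ h
      exact ⟨Or.inl h, by omega⟩
  rw [hfilter]; exact hBrun

lemma spanRes_eq_union (q1 : Q) (F : Set Q) (d : List Alph) :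
    spanResD δ q1 F d = ⋃ j ∈ F, TsetD δ d q1 j := by
  ext S
  simp only [spanResD, Set.mem_setOf_eq, Set.mem_iUnion, exists_prop]
  constructor
  · rintro ⟨w, hacc, hgw, rfl⟩
    refine ⟨(ser w).foldl δ q1, hacc, ?_, ?_, ?_⟩
    · intro p hp
      rw [mem_mkd] at hp
      obtain ⟨i, hi, he, _⟩ := hp
      have : w.length = d.length := by rw [← hgw]; simp [getWord]
      omega
    · intro p hp
      rw [mem_mkd] at hp
      obtain ⟨i, hi, he, _⟩ := hp
      have : w.length = d.length := by rw [← hgw]; simp [getWord]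
      omega
    · rw [show ins d (mkd w) = w from hgw ▸ ins_getWord_mkd w]
  · rintro ⟨j, hj, hbd, hne, hrun⟩
    refine ⟨ins d S, ?_, getWord_ins d S, ?_⟩
    · rw [hrun]; exact hj
    · exact mkd_ins d S (fun p hp => ⟨(hbd p hp).1, by have := hbd p hp; have := hne p hp; omega⟩)

end Main

/-- Let `M` be a DFA (initial state `q1`, accepting states `F`) representing a
non-tail-spanning spanner, and let the start rule be `S₀ → BC`, so the document is
`d = wB ++ wC`. With `F' = {j ∈ F : T_{S₀}[1, j] ≠ ∅}` and
`I[1, j] = {k : T_B[1, k] ≠ ∅ ∧ T_C[k, j] ≠ ∅}`, the sets `D_{j,k}`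
(`j ∈ F'`, `k ∈ I[1, j]`) cover `⟦M⟧(d)` and are pairwise disjoint. -/
theorem spanResD_eq_disjoint_union {Γ Alph Q : Type*} [DecidableEq Γ]
    (δ : Q → (Finset Γ ⊕ Alph) → Q) (q1 : Q) (F : Set Q) (wB wC : List Alph)
    (F' : Set Q) (hF' : F' = {j | j ∈ F ∧ (TsetD δ (wB ++ wC) q1 j).Nonempty})
    (I : Q → Set Q)
    (hI : ∀ j, I j = {k | (TsetD δ wB q1 k).Nonempty ∧ (TsetD δ wC k j).Nonempty}) :
    (spanResD δ q1 F (wB ++ wC) = ⋃ j ∈ F', ⋃ k ∈ I j, Dset δ wB wC q1 k j) ∧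
    (∀ j ∈ F', ∀ j' ∈ F', ∀ k ∈ I j, ∀ k' ∈ I j', (j, k) ≠ (j', k') →
      Disjoint (Dset δ wB wC q1 k j) (Dset δ wB wC q1 k' j')) := by
  subst hF'
  constructor
  · rw [spanRes_eq_union]
    ext Λ
    simp only [Set.mem_iUnion, exists_prop, Set.mem_setOf_eq, hI]
    constructor
    · rintro ⟨j, hjF, hT⟩
      have hD := Tset_split δ wB wC q1 j Λ hT
      refine ⟨j, ⟨hjF, ⟨Λ, hT⟩⟩, _, ?_, hD⟩
      obtain ⟨ΛB, hB, ΛC, hC, _⟩ := hD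
      exact ⟨⟨ΛB, hB⟩, ⟨ΛC, hC⟩⟩
    · rintro ⟨j, ⟨hjF, _⟩, k, _, hD⟩
      exact ⟨j, hjF, Dset_subset_Tset δ wB wC q1 k j hD⟩
  · rintro j - j' - k - k' - hne
    rw [Set.disjoint_left]
    intro Λ h1 h2
    apply hne
    have hj := (Dset_subset_Tset δ wB wC q1 k j h1).2.2
    have hj' := (Dset_subset_Tset δ wB wC q1 k' j' h2).2.2
    have hk := k_determined δ wB wC q1 k j Λ h1
    have hk' := k_determined δ wB wC q1 k' j' Λ h2
    rw [Prod.mk.injEq]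
    exact ⟨hj.symm.trans hj', hk.symm.trans hk'⟩
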